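/- arXiv:math/0611083 — 2 statements merged into one kernel-verified Lean document; each statement's English description precedes it below -/
import Mathlib

section
/- There exists a constant K > 0, independent of ε and of the coefficients (η_k), such that for every ε ∈ (0,1] with L/(2πε) a positive integer, (∫_{(0,L)×(0,1)} |β(x₁/ε, x₂/ε) − η₀|² dx)^{1/2} ≤ K √ε · M. (This is the macroscopic L² estimate for the oscillating boundary-layer corrector of Theorem 3.2, with M playing the role of the H^{1/2}(Γ) norm of the interface trace.) -/
open MeasureTheory Real Set

noncomputable section

/-- The smooth domain Ω⁰. -/
def Omega0 (L : ℝ) : Set (ℝ × ℝ) := Ioo 0 L ×ˢ Ioo (0 : ℝ) 1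

/-- The Fourier mode `e^{i k y₁ - |k| y₂}`. -/
def fourierMode (k : ℤ) (y₁ y₂ : ℝ) : ℂ :=
  Complex.exp (Complex.I * (k : ℂ) * (y₁ : ℂ) - ((|k| : ℤ) : ℂ) * (y₂ : ℂ))

/-- The boundary-layer corrector in the upper half plane, given by its Fourier series. -/
def blSeries (η : ℤ → ℂ) (y₁ y₂ : ℝ) : ℝ :=
  (∑' k : ℤ, η k * fourierMode k y₁ y₂).re

private lemma norm_fourierMode (k : ℤ) (y₁ y₂ : ℝ) :
    ‖fourierMode k y₁ y₂‖ = Real.exp (-|(k : ℝ)| * y₂) := by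
  rw [fourierMode, Complex.norm_exp]
  congr 1
  push_cast
  simp [Complex.sub_re, Complex.mul_re, Complex.mul_im]

private lemma summable_exp_abs {y : ℝ} (hy : 0 < y) :
    Summable (fun k : ℤ => Real.exp (-|(k : ℝ)| * y)) := by
  have h1 : Real.exp (-y) < 1 := Real.exp_lt_one_iff.mpr (by linarith)
  have key : Summable (fun n : ℕ => Real.exp (-(n : ℝ) * y)) := by
    refine (summable_geometric_of_lt_one (Real.exp_pos (-y)).le h1).congr fun n => ?_
    rw [← Real.exp_nat_mul]
    ring_nf
  apply Summable.of_nat_of_neg <;> refine key.congr fun n => ?_ <;> push_cast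
  · rw [abs_of_nonneg (by positivity : (0:ℝ) ≤ (n:ℝ))]
  · rw [abs_neg, abs_of_nonneg (by positivity : (0:ℝ) ≤ (n:ℝ))]

private lemma norm_eta_le (η : ℤ → ℂ) (M : ℝ)
    (hsum : Summable (fun k : ℤ => (1 + |(k : ℝ)|) * ‖η k‖ ^ 2))
    (hM0 : 0 ≤ M) (hM : M ^ 2 = ∑' k : ℤ, (1 + |(k : ℝ)|) * ‖η k‖ ^ 2)
    (k : ℤ) : ‖η k‖ ≤ M := by
  have h1 : ‖η k‖ ^ 2 ≤ (1 + |(k : ℝ)|) * ‖η k‖ ^ 2 := by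
    nlinarith [abs_nonneg (k : ℝ), sq_nonneg ‖η k‖]
  have h2 : (1 + |(k : ℝ)|) * ‖η k‖ ^ 2 ≤ M ^ 2 := by
    rw [hM]; exact hsum.le_tsum k fun j _ => by positivity
  nlinarith [norm_nonneg (η k)]

private lemma summable_eta_mode (η : ℤ → ℂ) (M : ℝ)
    (hsum : Summable (fun k : ℤ => (1 + |(k : ℝ)|) * ‖η k‖ ^ 2))
    (hM0 : 0 ≤ M) (hM : M ^ 2 = ∑' k : ℤ, (1 + |(k : ℝ)|) * ‖η k‖ ^ 2)
    (y₁ y₂ : ℝ) (hy : 0 < y₂) :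
    Summable fun k : ℤ => η k * fourierMode k y₁ y₂ := by
  apply Summable.of_norm
  refine Summable.of_nonneg_of_le (fun k => norm_nonneg _) (fun k => ?_)
    ((summable_exp_abs hy).mul_left M)
  rw [norm_mul, norm_fourierMode]
  exact mul_le_mul_of_nonneg_right (norm_eta_le η M hsum hM0 hM k) (Real.exp_pos _).le

def ggFun (k : ℤ) (y : ℝ) : ℝ :=
  if k = 0 then 0 else Real.exp (-|(k : ℝ)| * y) / (1 + |(k : ℝ)|)

def Sfun (y : ℝ) : ℝ := ∑' k : ℤ, ggFun k y

private lemma ggFun_nonneg (k : ℤ) (y : ℝ) : 0 ≤ ggFun k y := by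
  rw [ggFun]; split <;> positivity

private lemma summable_ggFun {y : ℝ} (hy : 0 < y) : Summable fun k : ℤ => ggFun k y := by
  refine Summable.of_nonneg_of_le (fun k => ggFun_nonneg k y) (fun k => ?_) (summable_exp_abs hy)
  rw [ggFun]
  split
  · subst ‹k = 0›; simp
  · rw [div_le_iff₀ (by positivity)]
    nlinarith [Real.exp_pos (-|(k:ℝ)| * y), abs_nonneg (k:ℝ)]

private lemma Sfun_nonneg (y : ℝ) : 0 ≤ Sfun y :=
  tsum_nonneg fun k => ggFun_nonneg k y

private lemma key_pointwise (η : ℤ → ℂ) (M : ℝ)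
    (hsum : Summable (fun k : ℤ => (1 + |(k : ℝ)|) * ‖η k‖ ^ 2))
    (hM0 : 0 ≤ M) (hM : M ^ 2 = ∑' k : ℤ, (1 + |(k : ℝ)|) * ‖η k‖ ^ 2)
    (y₁ y₂ : ℝ) (hy : 0 < y₂) :
    (blSeries η y₁ y₂ - (η 0).re) ^ 2 ≤ M ^ 2 * Sfun y₂ := by
  classical
  set c : ℤ → ℝ := fun k => if k = 0 then 0 else ‖η k‖ * Real.exp (-|(k : ℝ)| * y₂) with hc_def
  have hexp := summable_exp_abs hy
  have hc_nonneg : ∀ k, 0 ≤ c k := fun k => by rw [hc_def]; dsimp only; split <;> positivity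
  have hc : Summable c := by
    refine Summable.of_nonneg_of_le hc_nonneg (fun k => ?_) (hexp.mul_left M)
    rw [hc_def]; dsimp only; split
    · positivity
    · exact mul_le_mul_of_nonneg_right (norm_eta_le η M hsum hM0 hM k) (Real.exp_pos _).le
  have hfs : Summable fun k : ℤ => η k * fourierMode k y₁ y₂ :=
    summable_eta_mode η M hsum hM0 hM y₁ y₂ hy
  have hmode0 : fourierMode 0 y₁ y₂ = 1 := by simp [fourierMode]
  have hnorm_ite : ∀ k : ℤ, ‖if k = 0 then (0 : ℂ) else η k * fourierMode k y₁ y₂‖ = c k := by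
    intro k
    rw [hc_def]; dsimp only; split
    · simp
    · rw [norm_mul, norm_fourierMode]
  have hcsum_norm : Summable fun k : ℤ =>
      ‖if k = 0 then (0 : ℂ) else η k * fourierMode k y₁ y₂‖ :=
    hc.congr fun k => (hnorm_ite k).symm
  have habs : |blSeries η y₁ y₂ - (η 0).re| ≤ ∑' k, c k := by
    have h1 : blSeries η y₁ y₂ - (η 0).re
        = (∑' k : ℤ, if k = 0 then (0 : ℂ) else η k * fourierMode k y₁ y₂).re := by
      rw [blSeries, hfs.tsum_eq_add_tsum_ite 0, hmode0]
      simp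
    rw [h1]
    calc |(∑' k : ℤ, if k = 0 then (0 : ℂ) else η k * fourierMode k y₁ y₂).re|
        ≤ ‖∑' k : ℤ, if k = 0 then (0 : ℂ) else η k * fourierMode k y₁ y₂‖ :=
          Complex.abs_re_le_norm _
      _ ≤ ∑' k : ℤ, ‖if k = 0 then (0 : ℂ) else η k * fourierMode k y₁ y₂‖ :=
          norm_tsum_le_tsum_norm hcsum_norm
      _ = ∑' k, c k := tsum_congr hnorm_ite
  -- Cauchy-Schwarz
  set a : ℤ → ℝ := fun k =>
    Real.sqrt ((1 + |(k : ℝ)|) * ‖η k‖ ^ 2) * Real.exp (-|(k : ℝ)| * y₂ / 2) with ha_def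
  set b : ℤ → ℝ := fun k =>
    if k = 0 then 0 else Real.exp (-|(k : ℝ)| * y₂ / 2) / Real.sqrt (1 + |(k : ℝ)|) with hb_def
  have hk1 : ∀ k : ℤ, (0 : ℝ) < 1 + |(k : ℝ)| := fun k => by positivity
  have ha_nonneg : ∀ k, 0 ≤ a k := fun k => by rw [ha_def]; positivity
  have hb_nonneg : ∀ k, 0 ≤ b k := fun k => by rw [hb_def]; dsimp only; split <;> positivity
  have ha_sq : ∀ k, a k ^ 2 ≤ (1 + |(k : ℝ)|) * ‖η k‖ ^ 2 := by
    intro k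
    have h1 : a k ^ 2 = ((1 + |(k : ℝ)|) * ‖η k‖ ^ 2) * Real.exp (-|(k : ℝ)| * y₂) := by
      rw [ha_def]; dsimp only
      rw [mul_pow, Real.sq_sqrt (by positivity),
        show Real.exp (-|(k : ℝ)| * y₂ / 2) ^ 2 = Real.exp (-|(k : ℝ)| * y₂) from by
          rw [sq, ← Real.exp_add]; ring_nf]
    rw [h1]
    have h2 : Real.exp (-|(k : ℝ)| * y₂) ≤ 1 := by
      rw [← Real.exp_zero]
      apply Real.exp_le_exp.mpr
      nlinarith [abs_nonneg (k : ℝ)]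
    nlinarith [mul_nonneg (hk1 k).le (sq_nonneg ‖η k‖), Real.exp_pos (-|(k : ℝ)| * y₂)]
  have hb_sq : ∀ k, b k ^ 2 = ggFun k y₂ := by
    intro k
    rw [hb_def, ggFun]; dsimp only; split
    · simp
    · rw [div_pow, Real.sq_sqrt (hk1 k).le,
        show Real.exp (-|(k : ℝ)| * y₂ / 2) ^ 2 = Real.exp (-|(k : ℝ)| * y₂) from by
          rw [sq, ← Real.exp_add]; ring_nf]
  have hab : ∀ k, c k ≤ a k * b k := by
    intro k
    rw [hc_def, ha_def, hb_def]; dsimp only; split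
    · simp
    · have hs : Real.sqrt (1 + |(k : ℝ)|) ≠ 0 := by positivity
      rw [Real.sqrt_mul (hk1 k).le, Real.sqrt_sq (norm_nonneg _)]
      have he : Real.exp (-|(k : ℝ)| * y₂ / 2) * Real.exp (-|(k : ℝ)| * y₂ / 2)
          = Real.exp (-|(k : ℝ)| * y₂) := by rw [← Real.exp_add]; ring_nf
      refine le_of_eq ?_
      calc ‖η k‖ * Real.exp (-|(k : ℝ)| * y₂)
          = ‖η k‖ * (Real.exp (-|(k : ℝ)| * y₂ / 2) * Real.exp (-|(k : ℝ)| * y₂ / 2)) * 1 := by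
            rw [he, mul_one]
        _ = ‖η k‖ * (Real.exp (-|(k : ℝ)| * y₂ / 2) * Real.exp (-|(k : ℝ)| * y₂ / 2))
              * (Real.sqrt (1 + |(k : ℝ)|) / Real.sqrt (1 + |(k : ℝ)|)) := by
            rw [div_self hs]
        _ = Real.sqrt (1 + |(k : ℝ)|) * ‖η k‖ * Real.exp (-|(k : ℝ)| * y₂ / 2)
              * (Real.exp (-|(k : ℝ)| * y₂ / 2) / Real.sqrt (1 + |(k : ℝ)|)) := by
            ring
  have hggsum := summable_ggFun hy
  have hcs : ∑' k, c k ≤ M * Real.sqrt (Sfun y₂) := by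
    refine hc.tsum_le_of_sum_le fun s => ?_
    have h1 : ∑ k ∈ s, c k ≤ ∑ k ∈ s, a k * b k := Finset.sum_le_sum fun k _ => hab k
    have h2 := Finset.sum_mul_sq_le_sq_mul_sq s a b
    have h3 : ∑ k ∈ s, a k ^ 2 ≤ M ^ 2 := by
      rw [hM]
      exact (Finset.sum_le_sum fun k _ => ha_sq k).trans
        (hsum.sum_le_tsum s (fun k _ => by positivity))
    have h4 : ∑ k ∈ s, b k ^ 2 ≤ Sfun y₂ := by
      rw [show ∑ k ∈ s, b k ^ 2 = ∑ k ∈ s, ggFun k y₂ from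
        Finset.sum_congr rfl fun k _ => hb_sq k]
      exact hggsum.sum_le_tsum s (fun k _ => ggFun_nonneg k y₂)
    have hab_nn : 0 ≤ ∑ k ∈ s, a k * b k :=
      Finset.sum_nonneg fun k _ => mul_nonneg (ha_nonneg k) (hb_nonneg k)
    have hbs_nn : 0 ≤ ∑ k ∈ s, b k ^ 2 := Finset.sum_nonneg fun k _ => sq_nonneg _
    have h5 : (∑ k ∈ s, a k * b k) ^ 2 ≤ (M * Real.sqrt (Sfun y₂)) ^ 2 := by
      calc (∑ k ∈ s, a k * b k) ^ 2 ≤ (∑ k ∈ s, a k ^ 2) * ∑ k ∈ s, b k ^ 2 := h2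
        _ ≤ M ^ 2 * Sfun y₂ := mul_le_mul h3 h4 hbs_nn (sq_nonneg M)
        _ = (M * Real.sqrt (Sfun y₂)) ^ 2 := by
            rw [mul_pow, Real.sq_sqrt (Sfun_nonneg y₂)]
    calc ∑ k ∈ s, c k ≤ ∑ k ∈ s, a k * b k := h1
      _ = Real.sqrt ((∑ k ∈ s, a k * b k) ^ 2) := (Real.sqrt_sq hab_nn).symm
      _ ≤ Real.sqrt ((M * Real.sqrt (Sfun y₂)) ^ 2) := Real.sqrt_le_sqrt h5
      _ = M * Real.sqrt (Sfun y₂) := Real.sqrt_sq (by positivity)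
  calc (blSeries η y₁ y₂ - (η 0).re) ^ 2 = |blSeries η y₁ y₂ - (η 0).re| ^ 2 := (sq_abs _).symm
    _ ≤ (M * Real.sqrt (Sfun y₂)) ^ 2 :=
        pow_le_pow_left₀ (abs_nonneg _) (habs.trans hcs) 2
    _ = M ^ 2 * Sfun y₂ := by rw [mul_pow, Real.sq_sqrt (Sfun_nonneg y₂)]
private lemma exp_integral_bound {aa : ℝ} (ha : 0 < aa) :
    IntegrableOn (fun t : ℝ => Real.exp (-aa * t)) (Ioo 0 1) volume ∧
      ∫ t in Ioo (0:ℝ) 1, Real.exp (-aa * t) ≤ 1 / aa := by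
  have hcont : Continuous fun t : ℝ => Real.exp (-aa * t) :=
    Real.continuous_exp.comp (continuous_const.mul continuous_id)
  have hint : IntegrableOn (fun t : ℝ => Real.exp (-aa * t)) (Ioo 0 1) volume :=
    (hcont.integrableOn_Icc (a := 0) (b := 1)).mono_set Ioo_subset_Icc_self
  refine ⟨hint, ?_⟩
  have hderiv : ∀ t ∈ uIcc (0:ℝ) 1,
      HasDerivAt (fun t => -(Real.exp (-aa * t) / aa)) (Real.exp (-aa * t)) t := by
    intro t _
    have h1 : HasDerivAt (fun t : ℝ => -aa * t) (-aa) t := by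
      simpa using (hasDerivAt_id t).const_mul (-aa)
    have h4 := ((h1.exp).div_const aa).neg
    refine h4.congr_deriv ?_
    field_simp
  have heval : ∫ t in (0:ℝ)..1, Real.exp (-aa * t)
      = -(Real.exp (-aa * 1) / aa) - -(Real.exp (-aa * 0) / aa) :=
    intervalIntegral.integral_eq_sub_of_hasDerivAt hderiv (hcont.intervalIntegrable 0 1)
  rw [← MeasureTheory.integral_Ioc_eq_integral_Ioo,
    ← intervalIntegral.integral_of_le (zero_le_one), heval]
  have := Real.exp_pos (-aa * 1)
  rw [mul_zero, Real.exp_zero]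
  have h2 : 0 ≤ Real.exp (-aa * 1) / aa := by positivity
  linarith
private lemma lintegral_gg_le {ε : ℝ} (hε : 0 < ε) (k : ℤ) :
    ∫⁻ t in Ioo (0:ℝ) 1, ENNReal.ofReal (ggFun k (t / ε))
      ≤ ENNReal.ofReal (ε / (k : ℝ) ^ 2) := by
  rcases eq_or_ne k 0 with rfl | hk
  · simp [ggFun]
  · have hk0 : (k : ℝ) ≠ 0 := Int.cast_ne_zero.mpr hk
    have hk' : (0 : ℝ) < |(k : ℝ)| := abs_pos.mpr hk0
    set aa : ℝ := |(k : ℝ)| / ε with haa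
    have haa0 : 0 < aa := div_pos hk' hε
    have hgg : ∀ t : ℝ, ggFun k (t / ε) = Real.exp (-aa * t) / (1 + |(k : ℝ)|) := by
      intro t
      rw [ggFun, if_neg hk, haa]
      congr 2
      field_simp
    obtain ⟨hint, hle⟩ := exp_integral_bound haa0
    have h1k : (0:ℝ) < 1 + |(k : ℝ)| := by positivity
    have hint2 : IntegrableOn (fun t => Real.exp (-aa * t) / (1 + |(k : ℝ)|)) (Ioo 0 1) volume :=
      hint.div_const _
    calc ∫⁻ t in Ioo (0:ℝ) 1, ENNReal.ofReal (ggFun k (t / ε))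
        = ∫⁻ t in Ioo (0:ℝ) 1, ENNReal.ofReal (Real.exp (-aa * t) / (1 + |(k : ℝ)|)) :=
          lintegral_congr fun t => by rw [hgg]
      _ = ENNReal.ofReal (∫ t in Ioo (0:ℝ) 1, Real.exp (-aa * t) / (1 + |(k : ℝ)|)) :=
          (MeasureTheory.ofReal_integral_eq_lintegral_ofReal hint2
            (ae_of_all _ fun t => by positivity)).symm
      _ ≤ ENNReal.ofReal (ε / (k : ℝ) ^ 2) := by
          apply ENNReal.ofReal_le_ofReal
          rw [integral_div]
          have h1 : (∫ t in Ioo (0:ℝ) 1, Real.exp (-aa * t)) ≤ ε / |(k : ℝ)| := by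
            refine hle.trans (le_of_eq ?_)
            rw [haa, one_div_div]
          have h2 : (∫ t in Ioo (0:ℝ) 1, Real.exp (-aa * t)) / (1 + |(k : ℝ)|)
              ≤ (ε / |(k : ℝ)|) / (1 + |(k : ℝ)|) := by
            exact div_le_div_of_nonneg_right h1 h1k.le
          refine h2.trans ?_
          rw [div_div]
          apply div_le_div_of_nonneg_left hε.le (by positivity)
          nlinarith [sq_abs (k : ℝ), abs_nonneg (k : ℝ)]
/-- Macroscopic L² estimate for the oscillating boundary layer (Theorem 3.2, last claim):
`‖β(·/ε) − β̄‖_{L²(Ω⁰)} ≤ K √ε ‖η‖_{H^{1/2}(Γ)}`, with `K` independent of `ε` and of `η`. -/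
theorem boundary_layer_L2_macroscopic_estimate (L : ℝ) (hL : 0 < L) :
    ∃ K > (0 : ℝ), ∀ (η : ℤ → ℂ) (M : ℝ),
      (∀ k : ℤ, η (-k) = starRingEnd ℂ (η k)) →
      Summable (fun k : ℤ => (1 + |(k : ℝ)|) * ‖η k‖ ^ 2) →
      0 ≤ M → M ^ 2 = ∑' k : ℤ, (1 + |(k : ℝ)|) * ‖η k‖ ^ 2 →
      ∀ ε : ℝ, 0 < ε → ε ≤ 1 → (∃ N : ℕ, 0 < N ∧ L = 2 * π * ε * N) →
        Real.sqrt (∫ p in Omega0 L,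
            (blSeries η (p.1 / ε) (p.2 / ε) - (η 0).re) ^ 2)
          ≤ K * Real.sqrt ε * M := by
  classical
  set C : ℝ := ∑' k : ℤ, 1 / (k : ℝ) ^ 2 with hC_def
  have hCsum : Summable (fun k : ℤ => 1 / (k : ℝ) ^ 2) :=
    summable_one_div_int_pow.mpr one_lt_two
  have hC0 : 0 ≤ C := tsum_nonneg fun k => by positivity
  have hK : 0 < Real.sqrt (L * (C + 1)) := Real.sqrt_pos.mpr (by nlinarith)
  refine ⟨Real.sqrt (L * (C + 1)), hK, ?_⟩
  intro η M hconj hsum hM0 hM ε hε hε1 _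
  have hΩm : MeasurableSet (Omega0 L) :=
    (measurableSet_Ioo.prod measurableSet_Ioo : MeasurableSet (Ioo (0:ℝ) L ×ˢ Ioo (0:ℝ) 1))
  -- measurability of the boundary layer
  have hbl : AEStronglyMeasurable (fun p : ℝ × ℝ => blSeries η (p.1 / ε) (p.2 / ε))
      (volume.restrict (Omega0 L)) := by
    refine aestronglyMeasurable_of_tendsto_ae (Filter.atTop : Filter (Finset ℤ))
      (f := fun s (p : ℝ × ℝ) => (∑ k ∈ s, η k * fourierMode k (p.1 / ε) (p.2 / ε)).re)
      (fun s => ?_) ?_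
    · apply Continuous.aestronglyMeasurable
      refine Complex.continuous_re.comp (continuous_finset_sum s fun k _ => ?_)
      refine continuous_const.mul ?_
      unfold fourierMode
      fun_prop
    · filter_upwards [ae_restrict_mem hΩm] with p hp
      have hy : 0 < p.2 / ε := div_pos hp.2.1 hε
      have hs := summable_eta_mode η M hsum hM0 hM (p.1 / ε) (p.2 / ε) hy
      exact (Complex.continuous_re.tendsto _).comp hs.hasSum
  set G : ℝ → ENNReal := fun t => ∑' k : ℤ, ENNReal.ofReal (ggFun k (t / ε)) with hG_def
  have hgg_meas : ∀ k : ℤ, Measurable fun t : ℝ => ENNReal.ofReal (ggFun k (t / ε)) := by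
    intro k
    apply ENNReal.measurable_ofReal.comp
    rcases eq_or_ne k 0 with rfl | hk
    · simpa [ggFun] using (measurable_const : Measurable fun _ : ℝ => (0:ℝ))
    · have : Continuous fun t : ℝ => ggFun k (t / ε) := by
        simp only [ggFun, if_neg hk]
        fun_prop
      exact this.measurable
  have hG_meas : Measurable G := Measurable.ennreal_tsum hgg_meas
  have hSG : ∀ t : ℝ, ENNReal.ofReal (Sfun (t / ε)) ≤ G t := by
    intro t
    by_cases hsummable : Summable fun k : ℤ => ggFun k (t / ε)
    · rw [hG_def]
      rw [Sfun, ENNReal.ofReal_tsum_of_nonneg (fun k => ggFun_nonneg _ _) hsummable]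
    · rw [Sfun, tsum_eq_zero_of_not_summable hsummable]
      simp
  have hfin : ∫⁻ p in Omega0 L,
      ENNReal.ofReal ((blSeries η (p.1 / ε) (p.2 / ε) - (η 0).re) ^ 2)
      ≤ ENNReal.ofReal (L * (C + 1) * (ε * M ^ 2)) := by
    have step3 : ∫⁻ t in Ioo (0:ℝ) 1, G t ≤ ENNReal.ofReal (ε * C) := by
      have hsum2 : Summable fun k : ℤ => ε / (k : ℝ) ^ 2 :=
        (hCsum.mul_left ε).congr fun k => mul_one_div ε _
      calc ∫⁻ t in Ioo (0:ℝ) 1, G t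
          = ∑' k : ℤ, ∫⁻ t in Ioo (0:ℝ) 1, ENNReal.ofReal (ggFun k (t / ε)) :=
            lintegral_tsum fun k => (hgg_meas k).aemeasurable
        _ ≤ ∑' k : ℤ, ENNReal.ofReal (ε / (k : ℝ) ^ 2) :=
            ENNReal.tsum_le_tsum fun k => lintegral_gg_le hε k
        _ = ENNReal.ofReal (∑' k : ℤ, ε / (k : ℝ) ^ 2) :=
            (ENNReal.ofReal_tsum_of_nonneg (fun k => by positivity) hsum2).symm
        _ = ENNReal.ofReal (ε * C) := by
            congr 1
            rw [hC_def, ← tsum_mul_left]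
            exact tsum_congr fun k => (mul_one_div ε _).symm
    calc ∫⁻ p in Omega0 L,
        ENNReal.ofReal ((blSeries η (p.1 / ε) (p.2 / ε) - (η 0).re) ^ 2)
        ≤ ∫⁻ p in Omega0 L, ENNReal.ofReal (M ^ 2) * G p.2 := by
          apply lintegral_mono_ae
          filter_upwards [ae_restrict_mem hΩm] with p hp
          have hy : 0 < p.2 / ε := div_pos hp.2.1 hε
          calc ENNReal.ofReal ((blSeries η (p.1 / ε) (p.2 / ε) - (η 0).re) ^ 2)
              ≤ ENNReal.ofReal (M ^ 2 * Sfun (p.2 / ε)) :=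
                ENNReal.ofReal_le_ofReal (key_pointwise η M hsum hM0 hM _ _ hy)
            _ = ENNReal.ofReal (M ^ 2) * ENNReal.ofReal (Sfun (p.2 / ε)) :=
                ENNReal.ofReal_mul (sq_nonneg M)
            _ ≤ ENNReal.ofReal (M ^ 2) * G p.2 := mul_le_mul_right (hSG p.2) _
      _ = ENNReal.ofReal (M ^ 2) * ∫⁻ p in Omega0 L, G p.2 :=
          lintegral_const_mul' _ _ ENNReal.ofReal_ne_top
      _ = ENNReal.ofReal (M ^ 2) * (volume (Ioo (0:ℝ) L) * ∫⁻ t in Ioo (0:ℝ) 1, G t) := by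
          congr 1
          have hGm2 : AEMeasurable (fun p : ℝ × ℝ => G p.2)
              ((volume.restrict (Ioo (0:ℝ) L)).prod (volume.restrict (Ioo (0:ℝ) 1))) :=
            (hG_meas.comp measurable_snd).aemeasurable
          calc ∫⁻ p in Omega0 L, G p.2
              = ∫⁻ x in Ioo (0:ℝ) L, ∫⁻ t in Ioo (0:ℝ) 1, G t := by
                rw [Omega0, Measure.volume_eq_prod, ← Measure.prod_restrict,
                  MeasureTheory.lintegral_prod _ hGm2]
            _ = volume (Ioo (0:ℝ) L) * ∫⁻ t in Ioo (0:ℝ) 1, G t := by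
                rw [lintegral_const, Measure.restrict_apply_univ, mul_comm]
      _ ≤ ENNReal.ofReal (M ^ 2) * (ENNReal.ofReal L * ENNReal.ofReal (ε * C)) := by
          rw [Real.volume_Ioo, sub_zero]
          exact mul_le_mul_right (mul_le_mul_right step3 _) _
      _ ≤ ENNReal.ofReal (L * (C + 1) * (ε * M ^ 2)) := by
          rw [← ENNReal.ofReal_mul hL.le, ← ENNReal.ofReal_mul (sq_nonneg M)]
          apply ENNReal.ofReal_le_ofReal
          nlinarith [mul_nonneg (mul_nonneg hL.le hε.le) (sq_nonneg M),
            mul_nonneg (mul_nonneg (mul_nonneg hL.le hε.le) (sq_nonneg M)) hC0]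
  set f : ℝ × ℝ → ℝ := fun p => (blSeries η (p.1 / ε) (p.2 / ε) - (η 0).re) ^ 2 with hf_def
  have hf_meas : AEStronglyMeasurable f (volume.restrict (Omega0 L)) :=
    (hbl.sub aestronglyMeasurable_const).pow 2
  have hf_nn : 0 ≤ᵐ[volume.restrict (Omega0 L)] f := ae_of_all _ fun p => sq_nonneg _
  have hint_eq : ∫ p in Omega0 L, f p
      = (∫⁻ p in Omega0 L, ENNReal.ofReal (f p)).toReal :=
    integral_eq_lintegral_of_nonneg_ae hf_nn hf_meas
  have hbound_nn : 0 ≤ L * (C + 1) * (ε * M ^ 2) := by positivity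
  have hfinal : ∫ p in Omega0 L, f p ≤ L * (C + 1) * (ε * M ^ 2) := by
    rw [hint_eq]
    have h2 := ENNReal.toReal_mono ENNReal.ofReal_ne_top hfin
    rwa [ENNReal.toReal_ofReal hbound_nn] at h2
  calc Real.sqrt (∫ p in Omega0 L, f p) ≤ Real.sqrt (L * (C + 1) * (ε * M ^ 2)) :=
        Real.sqrt_le_sqrt hfinal
    _ = Real.sqrt (L * (C + 1)) * Real.sqrt ε * M := by
        rw [Real.sqrt_mul (by positivity : (0:ℝ) ≤ L * (C + 1)), Real.sqrt_mul hε.le,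
          Real.sqrt_sq hM0, mul_assoc]

end
end

section
/- For every y₁ ∈ ℝ and every y₂ > 0 one has the Fourier-mode representation u(y₁,y₂) = Σ_{k∈ℤ} η_k e^{i k y₁ − |k| y₂}, the series converging absolutely. (This is the explicit representation in Z⁺ of the periodic harmonic extension stated in Theorem 3.2.) -/
open MeasureTheory Real Set

noncomputable section

/-- Partial derivative in the first variable. -/
def pd1 (u : ℝ → ℝ → ℝ) (x y : ℝ) : ℝ := deriv (fun t => u t y) x

/-- Partial derivative in the second variable. -/
def pd2 (u : ℝ → ℝ → ℝ) (x y : ℝ) : ℝ := deriv (fun t => u x t) y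

/-- Laplacian. -/
def lap (u : ℝ → ℝ → ℝ) (x y : ℝ) : ℝ := pd1 (pd1 u) x y + pd2 (pd2 u) x y

/-- Squared modulus of the gradient. -/
def gradSq (u : ℝ → ℝ → ℝ) (x y : ℝ) : ℝ := (pd1 u x y) ^ 2 + (pd2 u x y) ^ 2

/-- `u` is continuous on the closed upper half plane, `2π`-periodic in `y₁`, harmonic in the
open upper half plane and with finite Dirichlet energy over one period. -/
structure UpperHarmonic (u : ℝ → ℝ → ℝ) : Prop where
  cont : ContinuousOn (fun p : ℝ × ℝ => u p.1 p.2) {p : ℝ × ℝ | 0 ≤ p.2}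
  periodic : ∀ y₁ y₂, u (y₁ + 2 * π) y₂ = u y₁ y₂
  smooth : ContDiffOn ℝ 2 (fun p : ℝ × ℝ => u p.1 p.2) {p : ℝ × ℝ | 0 < p.2}
  harmonic : ∀ p : ℝ × ℝ, 0 < p.2 → lap u p.1 p.2 = 0
  energy : IntegrableOn (fun p : ℝ × ℝ => gradSq u p.1 p.2) (Ioo 0 (2 * π) ×ˢ Ioi 0)

/-- Interface Fourier coefficients `η_k = (1/2π) ∫₀^{2π} u(t,0) e^{-ikt} dt`. -/
def interfaceFourierCoeff (u : ℝ → ℝ → ℝ) (k : ℤ) : ℂ :=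
  ((2 * π : ℝ) : ℂ)⁻¹ * ∫ t in (0 : ℝ)..(2 * π),
    (u t 0 : ℂ) * Complex.exp (-Complex.I * (k : ℂ) * (t : ℂ))

namespace HEx
open scoped ENNReal

def UHP : Set (ℝ × ℝ) := {p : ℝ × ℝ | 0 < p.2}

lemma isOpen_UHP : IsOpen UHP := isOpen_lt continuous_const continuous_snd

variable {u : ℝ → ℝ → ℝ}

def ff (u : ℝ → ℝ → ℝ) : ℝ × ℝ → ℝ := fun p => u p.1 p.2
def Df1 (u : ℝ → ℝ → ℝ) : ℝ × ℝ → (ℝ × ℝ →L[ℝ] ℝ) := fderiv ℝ (ff u)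
def Df2 (u : ℝ → ℝ → ℝ) : ℝ × ℝ → (ℝ × ℝ →L[ℝ] ℝ × ℝ →L[ℝ] ℝ) := fderiv ℝ (Df1 u)

lemma hDf1 (hu : UpperHarmonic u) : ContDiffOn ℝ 1 (Df1 u) UHP :=
  hu.smooth.fderiv_of_isOpen isOpen_UHP (by norm_num)

lemma hDf1c (hu : UpperHarmonic u) : ContinuousOn (Df1 u) UHP := (hDf1 hu).continuousOn

lemma hDf2c (hu : UpperHarmonic u) : ContinuousOn (Df2 u) UHP :=
  (hDf1 hu).continuousOn_fderiv_of_isOpen isOpen_UHP le_rfl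

lemma hfd (hu : UpperHarmonic u) {p : ℝ × ℝ} (hp : p ∈ UHP) :
    HasFDerivAt (ff u) (Df1 u p) p :=
  (((hu.smooth.contDiffAt (isOpen_UHP.mem_nhds hp)).differentiableAt
    (by norm_num)).hasFDerivAt)

lemma hfd2 (hu : UpperHarmonic u) {p : ℝ × ℝ} (hp : p ∈ UHP) :
    HasFDerivAt (Df1 u) (Df2 u p) p :=
  ((((hDf1 hu).contDiffAt (isOpen_UHP.mem_nhds hp)).differentiableAt
    one_ne_zero).hasFDerivAt)

lemma mem_UHP {x y : ℝ} (hy : 0 < y) : ((x, y) : ℝ × ℝ) ∈ UHP := hy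

lemma curve_horiz (y x : ℝ) : HasDerivAt (fun t : ℝ => ((t, y) : ℝ × ℝ)) (1, 0) x :=
  (hasDerivAt_id x).prodMk (hasDerivAt_const x y)

lemma curve_vert (x y : ℝ) : HasDerivAt (fun r : ℝ => ((x, r) : ℝ × ℝ)) (0, 1) y :=
  (hasDerivAt_const y x).prodMk (hasDerivAt_id y)

lemma hderiv1 (hu : UpperHarmonic u) (x : ℝ) {y : ℝ} (hy : 0 < y) :
    HasDerivAt (fun t => u t y) (Df1 u (x, y) (1, 0)) x := by
  have h := (hfd hu (mem_UHP hy)).comp_hasDerivAt x (curve_horiz y x)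
  exact h

lemma hderiv2 (hu : UpperHarmonic u) (x : ℝ) {y : ℝ} (hy : 0 < y) :
    HasDerivAt (fun r => u x r) (Df1 u (x, y) (0, 1)) y :=
  (hfd hu (mem_UHP hy)).comp_hasDerivAt y (curve_vert x y)

lemma pd1_eq (hu : UpperHarmonic u) (x : ℝ) {y : ℝ} (hy : 0 < y) :
    pd1 u x y = Df1 u (x, y) (1, 0) := (hderiv1 hu x hy).deriv

lemma pd2_eq (hu : UpperHarmonic u) (x : ℝ) {y : ℝ} (hy : 0 < y) :
    pd2 u x y = Df1 u (x, y) (0, 1) := (hderiv2 hu x hy).deriv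

lemma hderiv_pd1 (hu : UpperHarmonic u) (x : ℝ) {y : ℝ} (hy : 0 < y) :
    HasDerivAt (fun t => pd1 u t y) (Df2 u (x, y) (1, 0) (1, 0)) x := by
  have h1 : HasDerivAt (fun t : ℝ => Df1 u (t, y)) (Df2 u (x, y) (1, 0)) x :=
    (hfd2 hu (mem_UHP hy)).comp_hasDerivAt x (curve_horiz y x)
  have h2 : HasDerivAt (fun t : ℝ => Df1 u (t, y) (1, 0)) (Df2 u (x, y) (1, 0) (1, 0)) x :=
    h1.clm_apply (hasDerivAt_const x ((1, 0) : ℝ × ℝ)) |>.congr_deriv (by simp)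
  exact h2.congr_of_eventuallyEq (Filter.Eventually.of_forall fun t => (pd1_eq hu t hy))

lemma hderiv_pd2 (hu : UpperHarmonic u) (x : ℝ) {y : ℝ} (hy : 0 < y) :
    HasDerivAt (fun r => pd2 u x r) (Df2 u (x, y) (0, 1) (0, 1)) y := by
  have h1 : HasDerivAt (fun r : ℝ => Df1 u (x, r)) (Df2 u (x, y) (0, 1)) y :=
    (hfd2 hu (mem_UHP hy)).comp_hasDerivAt y (curve_vert x y)
  have h2 : HasDerivAt (fun r : ℝ => Df1 u (x, r) (0, 1)) (Df2 u (x, y) (0, 1) (0, 1)) y :=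
    h1.clm_apply (hasDerivAt_const y ((0, 1) : ℝ × ℝ)) |>.congr_deriv (by simp)
  refine h2.congr_of_eventuallyEq ?_
  filter_upwards [eventually_gt_nhds hy] with r hr
  exact pd2_eq hu x hr

lemma pd11_eq (hu : UpperHarmonic u) (x : ℝ) {y : ℝ} (hy : 0 < y) :
    pd1 (pd1 u) x y = Df2 u (x, y) (1, 0) (1, 0) := (hderiv_pd1 hu x hy).deriv

lemma pd22_eq (hu : UpperHarmonic u) (x : ℝ) {y : ℝ} (hy : 0 < y) :
    pd2 (pd2 u) x y = Df2 u (x, y) (0, 1) (0, 1) := (hderiv_pd2 hu x hy).deriv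

lemma contOn_pd1 (hu : UpperHarmonic u) :
    ContinuousOn (fun p : ℝ × ℝ => pd1 u p.1 p.2) UHP := by
  have : ContinuousOn (fun p : ℝ × ℝ => Df1 u p (1, 0)) UHP :=
    (hDf1c hu).clm_apply continuousOn_const
  exact this.congr fun p hp => by
    have := pd1_eq hu p.1 (show 0 < p.2 from hp); simpa using this

lemma contOn_pd2 (hu : UpperHarmonic u) :
    ContinuousOn (fun p : ℝ × ℝ => pd2 u p.1 p.2) UHP := by
  have : ContinuousOn (fun p : ℝ × ℝ => Df1 u p (0, 1)) UHP :=
    (hDf1c hu).clm_apply continuousOn_const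
  exact this.congr fun p hp => by
    have := pd2_eq hu p.1 (show 0 < p.2 from hp); simpa using this

lemma contOn_pd11 (hu : UpperHarmonic u) :
    ContinuousOn (fun p : ℝ × ℝ => pd1 (pd1 u) p.1 p.2) UHP := by
  have : ContinuousOn (fun p : ℝ × ℝ => Df2 u p (1, 0) (1, 0)) UHP :=
    ((hDf2c hu).clm_apply continuousOn_const).clm_apply continuousOn_const
  exact this.congr fun p hp => by
    have := pd11_eq hu p.1 (show 0 < p.2 from hp); simpa using this

lemma contOn_pd22 (hu : UpperHarmonic u) :
    ContinuousOn (fun p : ℝ × ℝ => pd2 (pd2 u) p.1 p.2) UHP := by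
  have : ContinuousOn (fun p : ℝ × ℝ => Df2 u p (0, 1) (0, 1)) UHP :=
    ((hDf2c hu).clm_apply continuousOn_const).clm_apply continuousOn_const
  exact this.congr fun p hp => by
    have := pd22_eq hu p.1 (show 0 < p.2 from hp); simpa using this

lemma contOn_gradSq (hu : UpperHarmonic u) :
    ContinuousOn (fun p : ℝ × ℝ => gradSq u p.1 p.2) UHP := by
  have h1 := contOn_pd1 hu
  have h2 := contOn_pd2 hu
  exact (h1.pow 2).add (h2.pow 2)

/-- Horizontal slice of a function continuous on the open half plane is continuous. -/
lemma cont_slice_horiz {E : Type*} [TopologicalSpace E] {g : ℝ × ℝ → E}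
    (hg : ContinuousOn g UHP) {y : ℝ} (hy : 0 < y) : Continuous (fun t => g (t, y)) := by
  rw [← continuousOn_univ]
  refine ContinuousOn.comp hg ((continuous_id.prodMk continuous_const).continuousOn) ?_
  intro t _
  exact hy

lemma cont_slice_bdry (hu : UpperHarmonic u) : Continuous (fun t => u t 0) := by
  rw [← continuousOn_univ]
  refine ContinuousOn.comp hu.cont ((continuous_id.prodMk continuous_const).continuousOn) ?_
  intro t _
  exact le_refl (0:ℝ)



/-- the exponential `e^{-ikt}`. -/
def ek (k : ℤ) (t : ℝ) : ℂ := Complex.exp (-Complex.I * k * t)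

lemma ek_def (k : ℤ) (t : ℝ) : ek k t = Complex.exp (-Complex.I * k * t) := rfl

lemma ek_hasDerivAt (k : ℤ) (t : ℝ) :
    HasDerivAt (ek k) (-Complex.I * k * ek k t) t := by
  have h0 : HasDerivAt (fun s : ℝ => (s : ℂ)) 1 t := by
    simpa using (hasDerivAt_id t).ofReal_comp
  have h1 : HasDerivAt (fun s : ℝ => -Complex.I * k * (s:ℂ)) (-Complex.I * k) t := by
    simpa using h0.const_mul (-Complex.I * (k:ℂ))
  have h2 := h1.cexp
  have : Complex.exp (-Complex.I * k * t) * (-Complex.I * k) = -Complex.I * k * ek k t := by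
    rw [ek_def]; ring
  rw [this] at h2
  exact h2

lemma ek_cont (k : ℤ) : Continuous (ek k) :=
  Complex.continuous_exp.comp ((continuous_const.mul Complex.continuous_ofReal))

lemma ek_norm (k : ℤ) (t : ℝ) : ‖ek k t‖ = 1 := by
  rw [ek_def, Complex.norm_exp]
  norm_num [Complex.exp_re, Complex.add_re, Complex.mul_re]

lemma ek_zero (k : ℤ) : ek k 0 = 1 := by simp [ek_def]

lemma ek_two_pi (k : ℤ) : ek k (2 * π) = 1 := by
  rw [ek_def]
  rw [show -Complex.I * k * ((2:ℝ) * (π:ℝ) : ℝ) = (-k : ℤ) * (2 * π * Complex.I) by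
    push_cast; ring]
  exact Complex.exp_int_mul_two_pi_mul_I (-k)

lemma periodic_deriv {g : ℝ → ℝ} (hg : Function.Periodic g (2 * π)) :
    Function.Periodic (deriv g) (2 * π) := by
  intro t
  have : (fun s => g (s + 2 * π)) = g := funext hg
  rw [← deriv_comp_add_const g (2 * π) t, this]

/-- Integration by parts with the periodic exponential. -/
lemma ibp {g g' : ℝ → ℝ} (hg : Function.Periodic g (2 * π))
    (hgd : ∀ t, HasDerivAt g (g' t) t) (hg'c : Continuous g') (k : ℤ) :
    ∫ t in (0:ℝ)..(2*π), (g' t : ℂ) * ek k t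
      = Complex.I * k * ∫ t in (0:ℝ)..(2*π), (g t : ℂ) * ek k t := by
  have hgc : Continuous g := continuous_iff_continuousAt.2 fun t => (hgd t).continuousAt
  have hWd : ∀ t ∈ uIcc (0:ℝ) (2*π), HasDerivAt (fun t => (g t : ℂ) * ek k t)
      ((g' t : ℂ) * ek k t + (g t : ℂ) * (-Complex.I * k * ek k t)) t := by
    intro t _
    exact ((hgd t).ofReal_comp).mul (ek_hasDerivAt k t)
  have c1 : Continuous fun t => (g' t : ℂ) * ek k t :=
    (Complex.continuous_ofReal.comp hg'c).mul (ek_cont k)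
  have c2 : Continuous fun t => (g t : ℂ) * (-Complex.I * k * ek k t) :=
    (Complex.continuous_ofReal.comp hgc).mul (continuous_const.mul (ek_cont k))
  have hFTC := intervalIntegral.integral_eq_sub_of_hasDerivAt hWd
    ((c1.add c2).intervalIntegrable _ _)
  have hW0 : (g (2*π) : ℂ) * ek k (2*π) - (g 0 : ℂ) * ek k 0 = 0 := by
    have hper : g (2*π) = g 0 := by simpa using hg 0
    rw [ek_two_pi, ek_zero, hper, sub_self]
  rw [hW0] at hFTC
  rw [intervalIntegral.integral_add (c1.intervalIntegrable _ _)
    (c2.intervalIntegrable _ _)] at hFTC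
  have hB : (fun t => (g t : ℂ) * (-Complex.I * k * ek k t))
      = fun t => (-(Complex.I * k)) • ((g t : ℂ) * ek k t) := by
    funext t; simp only [smul_eq_mul]; ring
  rw [hB, intervalIntegral.integral_smul] at hFTC
  have := eq_neg_of_add_eq_zero_left hFTC
  rw [this]
  simp only [smul_eq_mul]
  ring


section CC
variable {u : ℝ → ℝ → ℝ}

/-- slice Fourier coefficient at height y. -/
def cc (u : ℝ → ℝ → ℝ) (k : ℤ) (y : ℝ) : ℂ :=
  ((2 * π : ℝ) : ℂ)⁻¹ * ∫ t in (0:ℝ)..(2*π), (u t y : ℂ) * ek k t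

/-- slice coefficient of the vertical derivative. -/
def dd (u : ℝ → ℝ → ℝ) (k : ℤ) (y : ℝ) : ℂ :=
  ((2 * π : ℝ) : ℂ)⁻¹ * ∫ t in (0:ℝ)..(2*π), (pd2 u t y : ℂ) * ek k t

lemma slicePerStep (hu : UpperHarmonic u) (y : ℝ) :
    Function.Periodic (fun t => u t y) (2 * π) := fun t => hu.periodic t y

lemma pd1_slice_eq (y : ℝ) : (fun t => pd1 u t y) = deriv (fun s => u s y) := rfl

lemma slicePer1 (hu : UpperHarmonic u) (y : ℝ) :
    Function.Periodic (fun t => pd1 u t y) (2 * π) := by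
  rw [pd1_slice_eq]
  exact periodic_deriv (slicePerStep hu y)

lemma hderiv1' (hu : UpperHarmonic u) (x : ℝ) {y : ℝ} (hy : 0 < y) :
    HasDerivAt (fun t => u t y) (pd1 u x y) x := by
  rw [pd1_eq hu x hy]; exact hderiv1 hu x hy

lemma hderiv2' (hu : UpperHarmonic u) (x : ℝ) {y : ℝ} (hy : 0 < y) :
    HasDerivAt (fun r => u x r) (pd2 u x y) y := by
  rw [pd2_eq hu x hy]; exact hderiv2 hu x hy

lemma hderiv_pd1' (hu : UpperHarmonic u) (x : ℝ) {y : ℝ} (hy : 0 < y) :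
    HasDerivAt (fun t => pd1 u t y) (pd1 (pd1 u) x y) x := by
  rw [pd11_eq hu x hy]; exact hderiv_pd1 hu x hy

lemma hderiv_pd2' (hu : UpperHarmonic u) (x : ℝ) {y : ℝ} (hy : 0 < y) :
    HasDerivAt (fun r => pd2 u x r) (pd2 (pd2 u) x y) y := by
  rw [pd22_eq hu x hy]; exact hderiv_pd2 hu x hy

/-- one integration by parts. -/
lemma ibp1 (hu : UpperHarmonic u) (k : ℤ) {y : ℝ} (hy : 0 < y) :
    ∫ t in (0:ℝ)..(2*π), (pd1 u t y : ℂ) * ek k t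
      = Complex.I * k * ∫ t in (0:ℝ)..(2*π), (u t y : ℂ) * ek k t :=
  ibp (slicePerStep hu y) (fun t => hderiv1' hu t hy)
    (cont_slice_horiz (contOn_pd1 hu) hy) k

/-- two integrations by parts. -/
lemma ibp2 (hu : UpperHarmonic u) (k : ℤ) {y : ℝ} (hy : 0 < y) :
    ∫ t in (0:ℝ)..(2*π), (pd1 (pd1 u) t y : ℂ) * ek k t
      = -(k:ℂ)^2 * ∫ t in (0:ℝ)..(2*π), (u t y : ℂ) * ek k t := by
  have h2 := ibp (slicePer1 hu y) (fun t => hderiv_pd1' hu t hy)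
    (cont_slice_horiz (contOn_pd11 hu) hy) k
  rw [h2, ibp1 hu k hy, ← mul_assoc]
  ring_nf
  rw [Complex.I_sq]
  ring

/-- generic differentiation under the interval integral. -/
lemma hasDerivAt_under_integral {G G' : ℝ × ℝ → ℝ}
    (hGc : ContinuousOn G UHP) (hG'c : ContinuousOn G' UHP)
    (hd : ∀ x r, 0 < r → HasDerivAt (fun r' => G (x, r')) (G' (x, r)) r)
    (k : ℤ) {y₀ : ℝ} (hy₀ : 0 < y₀) :
    HasDerivAt (fun y => ∫ t in (0:ℝ)..(2*π), (G (t, y) : ℂ) * ek k t)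
      (∫ t in (0:ℝ)..(2*π), (G' (t, y₀) : ℂ) * ek k t) y₀ := by
  have hε : 0 < y₀ / 2 := by linarith
  set K : Set (ℝ × ℝ) := Icc 0 (2*π) ×ˢ Icc (y₀/2) (3*y₀/2) with hK
  have hKc : IsCompact K := isCompact_Icc.prod isCompact_Icc
  have hKU : K ⊆ UHP := by
    rintro ⟨a, b⟩ ⟨_, hb⟩
    exact lt_of_lt_of_le hε hb.1
  obtain ⟨C, hC⟩ := hKc.exists_bound_of_continuousOn (hG'c.mono hKU)
  have hball : ∀ x ∈ Metric.ball y₀ (y₀/2), 0 < x ∧ x ∈ Icc (y₀/2) (3*y₀/2) := by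
    intro x hx
    rw [Real.ball_eq_Ioo] at hx
    constructor
    · linarith [hx.1]
    · constructor <;> [linarith [hx.1]; linarith [hx.2]]
  have key := intervalIntegral.hasDerivAt_integral_of_dominated_loc_of_deriv_le
    (F := fun y t => (G (t, y) : ℂ) * ek k t)
    (F' := fun y t => (G' (t, y) : ℂ) * ek k t)
    (bound := fun _ => C) (a := (0:ℝ)) (b := 2*π) (μ := volume) (x₀ := y₀) (Metric.ball_mem_nhds y₀ hε)
    ?_ ?_ ?_ ?_ ?_ ?_
  · exact key.2
  · -- measurability eventually
    filter_upwards [Metric.ball_mem_nhds y₀ hε] with x hx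
    have hx0 : 0 < x := (hball x hx).1
    exact (((Complex.continuous_ofReal.comp (cont_slice_horiz hGc hx0)).mul
      (ek_cont k))).aestronglyMeasurable
  · exact (((Complex.continuous_ofReal.comp (cont_slice_horiz hGc hy₀)).mul
      (ek_cont k))).intervalIntegrable _ _
  · exact (((Complex.continuous_ofReal.comp (cont_slice_horiz hG'c hy₀)).mul
      (ek_cont k))).aestronglyMeasurable
  · refine Filter.Eventually.of_forall fun t ht => fun x hx => ?_
    have hx' := hball x hx
    have htI : t ∈ Icc 0 (2*π) := by
      have h2π : (0:ℝ) ≤ 2*π := by positivity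
      rw [uIoc_of_le h2π] at ht
      exact ⟨le_of_lt ht.1, ht.2⟩
    have : ((t, x) : ℝ × ℝ) ∈ K := ⟨htI, hx'.2⟩
    calc ‖(G' (t, x) : ℂ) * ek k t‖ = ‖G' (t, x)‖ := by
          rw [norm_mul, ek_norm, mul_one, Complex.norm_real]
      _ ≤ C := hC _ this
  · exact intervalIntegrable_const
  · refine Filter.Eventually.of_forall fun t ht => fun x hx => ?_
    have hx0 : 0 < x := (hball x hx).1
    exact ((hd t x hx0).ofReal_comp).mul_const (ek k t)

lemma cc_hasDeriv (hu : UpperHarmonic u) (k : ℤ) {y : ℝ} (hy : 0 < y) :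
    HasDerivAt (cc u k) (dd u k y) y := by
  have h := hasDerivAt_under_integral (G := fun p => u p.1 p.2)
    (G' := fun p => pd2 u p.1 p.2) hu.smooth.continuousOn (contOn_pd2 hu)
    (fun x r hr => hderiv2' hu x hr) k hy
  exact h.const_mul _

lemma dd_hasDeriv (hu : UpperHarmonic u) (k : ℤ) {y : ℝ} (hy : 0 < y) :
    HasDerivAt (dd u k) ((k:ℂ)^2 * cc u k y) y := by
  have h := hasDerivAt_under_integral (G := fun p => pd2 u p.1 p.2)
    (G' := fun p => pd2 (pd2 u) p.1 p.2) (contOn_pd2 hu) (contOn_pd22 hu)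
    (fun x r hr => hderiv_pd2' hu x hr) k hy
  have h22 : (fun t => (pd2 (pd2 u) t y : ℂ)) = fun t => -(pd1 (pd1 u) t y : ℂ) := by
    funext t
    have := hu.harmonic (t, y) hy
    rw [lap] at this
    have : pd2 (pd2 u) t y = -(pd1 (pd1 u) t y) := by linarith
    rw [this]; push_cast; ring
  have hval : ∫ t in (0:ℝ)..(2*π), (pd2 (pd2 u) t y : ℂ) * ek k t
      = (k:ℂ)^2 * ∫ t in (0:ℝ)..(2*π), (u t y : ℂ) * ek k t := by
    have : (fun t => (pd2 (pd2 u) t y : ℂ) * ek k t)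
        = fun t => -((pd1 (pd1 u) t y : ℂ) * ek k t) := by
      funext t; rw [congrFun h22 t]; ring
    rw [intervalIntegral.integral_congr (fun t _ => congrFun this t),
      intervalIntegral.integral_neg, ibp2 hu k hy]
    ring
  have := h.const_mul (((2 * π : ℝ) : ℂ)⁻¹)
  rw [hval] at this
  have hgoal : ((2 * π : ℝ) : ℂ)⁻¹ * ((k:ℂ)^2 * ∫ t in (0:ℝ)..(2*π), (u t y : ℂ) * ek k t)
      = (k:ℂ)^2 * cc u k y := by rw [cc]; ring
  rw [hgoal] at this
  exact this

end CC

section ODE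
variable {u : ℝ → ℝ → ℝ}

lemma expc_hasDerivAt (c : ℂ) (y : ℝ) :
    HasDerivAt (fun s : ℝ => Complex.exp (c * s)) (c * Complex.exp (c * y)) y := by
  have h0 : HasDerivAt (fun s : ℝ => (s : ℂ)) 1 y := by
    simpa using (hasDerivAt_id y).ofReal_comp
  have h1 : HasDerivAt (fun s : ℝ => c * (s:ℂ)) c y := by simpa using h0.const_mul c
  have h2 := h1.cexp
  rw [mul_comm] at h2
  exact h2

/-- functions satisfying `G' = mG` on `(0,∞)` have constant `G e^{-my}`. -/
lemma exp_solution {G : ℝ → ℂ} {m : ℝ}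
    (hG : ∀ y ∈ Ioi (0:ℝ), HasDerivAt G ((m:ℂ) * G y) y) {a b : ℝ} (ha : 0 < a) (hb : 0 < b) :
    G b * Complex.exp (-(m:ℂ) * b) = G a * Complex.exp (-(m:ℂ) * a) := by
  have hsub : uIcc a b ⊆ Ioi (0:ℝ) := by
    intro y hy
    have := hy.1
    rcases le_total a b with h | h
    · rw [uIcc_of_le h] at hy; exact lt_of_lt_of_le ha hy.1
    · rw [uIcc_of_ge h] at hy; exact lt_of_lt_of_le hb hy.1
  have hHd : ∀ y ∈ uIcc a b,
      HasDerivAt (fun y => G y * Complex.exp (-(m:ℂ) * y)) 0 y := by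
    intro y hy
    have h1 := (hG y (hsub hy)).mul (expc_hasDerivAt (-(m:ℂ)) y)
    exact h1.congr_deriv (by ring)
  have := intervalIntegral.integral_eq_sub_of_hasDerivAt hHd
    (intervalIntegrable_const (c := (0:ℂ)))
  simp only [intervalIntegral.integral_zero] at this
  exact (sub_eq_zero.mp this.symm)

/-- the combination `g = ∂₂ĉ + |k| ĉ`. -/
def gg (u : ℝ → ℝ → ℝ) (k : ℤ) (y : ℝ) : ℂ :=
  dd u k y + ((|k| : ℤ) : ℂ) * cc u k y

lemma gg_hasDeriv (hu : UpperHarmonic u) (k : ℤ) {y : ℝ} (hy : 0 < y) :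
    HasDerivAt (gg u k) ((((|k| : ℤ) : ℝ) : ℂ) * gg u k y) y := by
  have h := (dd_hasDeriv hu k hy).add ((cc_hasDeriv hu k hy).const_mul ((|k| : ℤ) : ℂ))
  have hval : (k:ℂ)^2 * cc u k y + ((|k| : ℤ) : ℂ) * dd u k y
      = (((|k| : ℤ) : ℝ) : ℂ) * gg u k y := by
    have habs : (((|k| : ℤ) : ℂ))^2 = (k:ℂ)^2 := by
      norm_cast; exact sq_abs k
    have hcast : ((((|k| : ℤ) : ℝ)) : ℂ) = ((|k| : ℤ) : ℂ) := by norm_cast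
    rw [gg, hcast, mul_add, ← habs]
    ring
  rw [← hval]
  exact h

end ODE

section CS

/-- elementary Cauchy-Schwarz for interval integrals of nonnegative continuous functions. -/
lemma cs_integral {v : ℝ → ℝ} (hv : Continuous v) (hnn : ∀ t, 0 ≤ v t) :
    (∫ t in (0:ℝ)..(2*π), v t)^2 ≤ (2*π) * ∫ t in (0:ℝ)..(2*π), (v t)^2 := by
  set S := ∫ t in (0:ℝ)..(2*π), v t with hS
  set A := ∫ t in (0:ℝ)..(2*π), (v t)^2 with hA
  have h2π : (0:ℝ) < 2*π := by positivity
  have hSnn : 0 ≤ S := intervalIntegral.integral_nonneg (le_of_lt h2π) (fun t _ => hnn t)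
  have hAnn : 0 ≤ A := intervalIntegral.integral_nonneg (le_of_lt h2π)
    (fun t _ => sq_nonneg _)
  have key : ∀ ε : ℝ, 0 < ε → S ≤ A/(2*ε) + π*ε := by
    intro ε hε
    have hpt : ∀ t ∈ Icc (0:ℝ) (2*π), v t ≤ (v t)^2/(2*ε) + ε/2 := by
      intro t _
      have h := sq_nonneg (v t - ε)
      have := mul_pos (by norm_num : (0:ℝ) < 2) hε
      rw [div_add_div _ _ (by linarith) (by norm_num : (2:ℝ) ≠ 0), le_div_iff₀ (by linarith)]
      nlinarith
    have hint1 : IntervalIntegrable v volume 0 (2*π) := hv.intervalIntegrable _ _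
    have hint2 : IntervalIntegrable (fun t => (v t)^2/(2*ε) + ε/2) volume 0 (2*π) :=
      (((hv.pow 2).div_const _).add continuous_const).intervalIntegrable _ _
    have := intervalIntegral.integral_mono_on (le_of_lt h2π) hint1 hint2 hpt
    rw [intervalIntegral.integral_add ((show Continuous fun t => v t ^ 2 / (2*ε) from
        ((hv.pow 2)).div_const _).intervalIntegrable _ _)
      (intervalIntegrable_const), intervalIntegral.integral_div,
      intervalIntegral.integral_const] at this
    calc S ≤ A/(2*ε) + (2*π - 0) • (ε/2) := this
      _ = A/(2*ε) + π*ε := by rw [smul_eq_mul]; ring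
  rcases eq_or_lt_of_le hAnn with hA0 | hA0
  · have hS0 : S ≤ 0 := by
      by_contra h
      push_neg at h
      have := key (S/(2*π)) (by positivity)
      rw [← hA0] at this
      simp only [zero_div] at this
      have heq : π * (S/(2*π)) = S/2 := by
        field_simp
      rw [heq] at this
      linarith
    have : S = 0 := le_antisymm hS0 hSnn
    rw [this]
    nlinarith
  · set ε := Real.sqrt (A/(2*π)) with hε
    have hεpos : 0 < ε := Real.sqrt_pos.mpr (by positivity)
    have hε2 : ε^2 = A/(2*π) := Real.sq_sqrt (by positivity)
    have hA' : A = 2*π*ε^2 := by rw [hε2]; field_simp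
    have h1 := key ε hεpos
    have h2 : A/(2*ε) + π*ε = 2*π*ε := by rw [hA']; field_simp; ring
    rw [h2] at h1
    calc S^2 ≤ (2*π*ε)^2 := by nlinarith
      _ = 2*π*A := by rw [hA']; ring
end CS

section GGBound
variable {u : ℝ → ℝ → ℝ}

/-- the unimodular factor relating `|k| ĉ` to the coefficient of `∂₁u`. -/
def sig (k : ℤ) : ℂ := if k = 0 then 0 else -Complex.I * ((|k| : ℤ) : ℂ) / (k : ℂ)

lemma sig_norm_le (k : ℤ) : ‖sig k‖ ≤ 1 := by
  rw [sig]
  split_ifs with h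
  · simp
  · have hk : ((k:ℤ):ℂ) ≠ 0 := by exact_mod_cast h
    rw [norm_div, norm_mul, norm_neg, Complex.norm_I, one_mul]
    rw [div_le_one (norm_pos_iff.mpr hk)]
    have : ‖((|k| : ℤ) : ℂ)‖ = ‖((k : ℤ) : ℂ)‖ := by
      rcases abs_choice k with h1 | h1 <;> rw [h1] <;> simp
    rw [this]

lemma sig_mul (k : ℤ) (z : ℂ) : sig k * (Complex.I * k * z) = ((|k| : ℤ) : ℂ) * z := by
  rw [sig]
  split_ifs with h
  · subst h; simp
  · have hk : ((k:ℤ):ℂ) ≠ 0 := by exact_mod_cast h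
    field_simp
    linear_combination (-(((|k| : ℤ) : ℂ) * z)) * Complex.I_sq

/-- `g` as a single integral. -/
lemma gg_repr (hu : UpperHarmonic u) (k : ℤ) {y : ℝ} (hy : 0 < y) :
    gg u k y = ((2 * π : ℝ) : ℂ)⁻¹
      * ∫ t in (0:ℝ)..(2*π), ((pd2 u t y : ℂ) + sig k * (pd1 u t y : ℂ)) * ek k t := by
  have c1 : Continuous fun t => (pd2 u t y : ℂ) * ek k t :=
    (Complex.continuous_ofReal.comp (cont_slice_horiz (contOn_pd2 hu) hy)).mul (ek_cont k)
  have c2 : Continuous fun t => (pd1 u t y : ℂ) * ek k t :=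
    (Complex.continuous_ofReal.comp (cont_slice_horiz (contOn_pd1 hu) hy)).mul (ek_cont k)
  have hsplit : (fun t => ((pd2 u t y : ℂ) + sig k * (pd1 u t y : ℂ)) * ek k t)
      = fun t => (pd2 u t y : ℂ) * ek k t + sig k • ((pd1 u t y : ℂ) * ek k t) := by
    funext t; simp only [smul_eq_mul]; ring
  rw [hsplit, intervalIntegral.integral_add (c1.intervalIntegrable _ _)
    ((show Continuous fun t => sig k • ((pd1 u t y : ℂ) * ek k t) from
      c2.const_smul (sig k)).intervalIntegrable _ _), intervalIntegral.integral_smul,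
    smul_eq_mul, ibp1 hu k hy, sig_mul, gg, dd, cc]
  ring

/-- the key slice bound `‖g‖² ≤ π⁻¹ ∫ |∇u|²`. -/
lemma gg_sq_le (hu : UpperHarmonic u) (k : ℤ) {y : ℝ} (hy : 0 < y) :
    ‖gg u k y‖^2 ≤ (1/π) * ∫ t in (0:ℝ)..(2*π), gradSq u t y := by
  have h2π : (0:ℝ) < 2*π := by positivity
  set v : ℝ → ℝ := fun t => |pd1 u t y| + |pd2 u t y| with hv
  have hvc : Continuous v :=
    ((cont_slice_horiz (contOn_pd1 hu) hy).abs).add ((cont_slice_horiz (contOn_pd2 hu) hy).abs)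
  have hvnn : ∀ t, 0 ≤ v t := fun t => by positivity
  set S := ∫ t in (0:ℝ)..(2*π), v t with hSdef
  set A := ∫ t in (0:ℝ)..(2*π), (v t)^2 with hAdef
  set Ey := ∫ t in (0:ℝ)..(2*π), gradSq u t y with hEydef
  have hSnn : 0 ≤ S := intervalIntegral.integral_nonneg (le_of_lt h2π) (fun t _ => hvnn t)
  have fc : Continuous fun t => ((pd2 u t y : ℂ) + sig k * (pd1 u t y : ℂ)) * ek k t := by
    refine Continuous.mul ?_ (ek_cont k)
    exact (Complex.continuous_ofReal.comp (cont_slice_horiz (contOn_pd2 hu) hy)).add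
      (continuous_const.mul (Complex.continuous_ofReal.comp
        (cont_slice_horiz (contOn_pd1 hu) hy)))
  have h1 : ‖gg u k y‖ ≤ (2*π)⁻¹ * S := by
    rw [gg_repr hu k hy, norm_mul]
    have hn : ‖((2 * π : ℝ) : ℂ)⁻¹‖ = (2*π)⁻¹ := by
      rw [norm_inv, Complex.norm_real, Real.norm_eq_abs, abs_of_pos h2π]
    rw [hn]
    gcongr
    calc ‖∫ t in (0:ℝ)..(2*π), ((pd2 u t y : ℂ) + sig k * (pd1 u t y : ℂ)) * ek k t‖
        ≤ ∫ t in (0:ℝ)..(2*π), ‖((pd2 u t y : ℂ) + sig k * (pd1 u t y : ℂ)) * ek k t‖ :=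
          intervalIntegral.norm_integral_le_integral_norm (le_of_lt h2π)
      _ ≤ S := by
          refine intervalIntegral.integral_mono_on (le_of_lt h2π)
            (fc.norm.intervalIntegrable _ _) (hvc.intervalIntegrable _ _) ?_
          intro t _
          rw [norm_mul, ek_norm, mul_one]
          calc ‖(pd2 u t y : ℂ) + sig k * (pd1 u t y : ℂ)‖
              ≤ ‖(pd2 u t y : ℂ)‖ + ‖sig k * (pd1 u t y : ℂ)‖ := norm_add_le _ _
            _ ≤ |pd2 u t y| + 1 * |pd1 u t y| := by
                rw [norm_mul, Complex.norm_real, Complex.norm_real,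
                  Real.norm_eq_abs, Real.norm_eq_abs]
                gcongr
                exact sig_norm_le k
            _ = v t := by rw [one_mul, hv]; ring
  have h3 : S^2 ≤ 2*π*A := cs_integral hvc hvnn
  have h4 : A ≤ 2 * Ey := by
    have : (fun t => 2 * gradSq u t y) = fun t => 2 * ((pd1 u t y)^2 + (pd2 u t y)^2) := by
      funext t; rw [gradSq]
    rw [hAdef, hEydef, ← intervalIntegral.integral_const_mul]
    refine intervalIntegral.integral_mono_on (le_of_lt h2π)
      ((hvc.pow 2).intervalIntegrable _ _)
      ((continuous_const.mul (cont_slice_horiz (contOn_gradSq hu) hy)).intervalIntegrable _ _) ?_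
    intro t _
    show (|pd1 u t y| + |pd2 u t y|)^2 ≤ 2 * gradSq u t y
    rw [gradSq]
    nlinarith [sq_nonneg (|pd1 u t y| - |pd2 u t y|), sq_abs (pd1 u t y), sq_abs (pd2 u t y)]
  calc ‖gg u k y‖^2 ≤ ((2*π)⁻¹ * S)^2 := by
        have := norm_nonneg (gg u k y)
        nlinarith
    _ = S^2/(2*π)^2 := by ring
    _ ≤ (2*π*A)/(2*π)^2 := by gcongr
    _ = A/(2*π) := by field_simp
    _ ≤ (2*Ey)/(2*π) := by gcongr
    _ = (1/π)*Ey := by field_simp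

end GGBound

section Energy
variable {u : ℝ → ℝ → ℝ}

lemma energy_fin (hu : UpperHarmonic u) :
    ∫⁻ y in Ioi (0:ℝ), (∫⁻ t in Ioo 0 (2*π), ENNReal.ofReal (gradSq u t y)) ≠ ⊤ := by
  have hE := hu.energy
  have hfin : ∫⁻ p in Ioo (0:ℝ) (2*π) ×ˢ Ioi (0:ℝ),
      ENNReal.ofReal (gradSq u p.1 p.2) < ⊤ := by
    refine lt_of_le_of_lt (lintegral_mono fun p => ?_) hE.2
    exact ofReal_le_enorm _
  have hmeas : AEMeasurable (fun p : ℝ × ℝ => ENNReal.ofReal (gradSq u p.1 p.2))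
      ((volume.restrict (Ioo (0:ℝ) (2*π))).prod (volume.restrict (Ioi (0:ℝ)))) := by
    rw [Measure.prod_restrict, ← Measure.volume_eq_prod]
    exact hE.1.aemeasurable.ennreal_ofReal
  have := lintegral_prod_symm _ hmeas
  rw [Measure.prod_restrict, ← Measure.volume_eq_prod] at this
  rw [← this]
  exact hfin.ne

lemma norm_exp_real_mul (c : ℝ) (s : ℝ) :
    ‖Complex.exp ((c:ℂ) * (s:ℂ))‖ = Real.exp (c * s) := by
  rw [Complex.norm_exp]
  norm_cast

lemma gg_zero (hu : UpperHarmonic u) (k : ℤ) {y : ℝ} (hy : 0 < y) : gg u k y = 0 := by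
  by_contra hne
  set κ : ℝ := ((|k| : ℤ) : ℝ) with hκdef
  have hκ : 0 ≤ κ := by
    rw [hκdef]; exact_mod_cast abs_nonneg k
  have hder : ∀ r ∈ Ioi (0:ℝ), HasDerivAt (gg u k) ((κ:ℂ) * gg u k r) r :=
    fun r hr => gg_hasDeriv hu k hr
  have hgrow : ∀ r, y ≤ r → ‖gg u k y‖ ≤ ‖gg u k r‖ := by
    intro r hr
    have h0r : 0 < r := lt_of_lt_of_le hy hr
    have hsol := exp_solution hder h0r hy
    -- ‖gg y‖ * exp(-κ y) = ‖gg r‖ * exp (-κ r)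
    have hnorm := congrArg norm hsol
    rw [norm_mul, norm_mul] at hnorm
    have e1 : ‖Complex.exp (-(κ:ℂ) * (y:ℂ))‖ = Real.exp (-κ * y) := by
      rw [show (-(κ:ℂ)) = ((-κ : ℝ) : ℂ) by push_cast; ring]
      exact norm_exp_real_mul (-κ) y
    have e2 : ‖Complex.exp (-(κ:ℂ) * (r:ℂ))‖ = Real.exp (-κ * r) := by
      rw [show (-(κ:ℂ)) = ((-κ : ℝ) : ℂ) by push_cast; ring]
      exact norm_exp_real_mul (-κ) r
    rw [e1, e2] at hnorm
    have hle : Real.exp (-κ * r) ≤ Real.exp (-κ * y) := by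
      apply Real.exp_le_exp.mpr
      nlinarith
    have hpos : (0:ℝ) < Real.exp (-κ * y) := Real.exp_pos _
    nlinarith [norm_nonneg (gg u k r), Real.exp_pos (-κ * r)]
  set δ : ℝ := π * ‖gg u k y‖^2 with hδ
  have hδpos : 0 < δ := by
    have := norm_pos_iff.mpr hne
    positivity
  have h2π : (0:ℝ) < 2*π := by positivity
  have hEbound : ∀ r, y ≤ r →
      ENNReal.ofReal δ ≤ ∫⁻ t in Ioo (0:ℝ) (2*π), ENNReal.ofReal (gradSq u t r) := by
    intro r hr
    have h0r : 0 < r := lt_of_lt_of_le hy hr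
    have hb := gg_sq_le hu k h0r
    have h1 : δ ≤ ∫ t in (0:ℝ)..(2*π), gradSq u t r := by
      have hm := hgrow r hr
      have hπ : (0:ℝ) < π := Real.pi_pos
      have hb2 := mul_le_mul_of_nonneg_left hb (le_of_lt hπ)
      have hcan : π * (1/π * ∫ t in (0:ℝ)..(2*π), gradSq u t r)
          = ∫ t in (0:ℝ)..(2*π), gradSq u t r := by field_simp
      rw [hcan] at hb2
      rw [hδ]
      have hsq : ‖gg u k y‖^2 ≤ ‖gg u k r‖^2 := by
        nlinarith [norm_nonneg (gg u k y)]
      nlinarith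
    have hcont : Continuous (fun t => gradSq u t r) :=
      cont_slice_horiz (contOn_gradSq hu) h0r
    have hint : IntegrableOn (fun t => gradSq u t r) (Ioo 0 (2*π)) :=
      (hcont.integrableOn_Icc).mono_set Ioo_subset_Icc_self
    have heq : ∫ t in (0:ℝ)..(2*π), gradSq u t r = ∫ t in Ioo (0:ℝ) (2*π), gradSq u t r := by
      rw [intervalIntegral.integral_of_le (le_of_lt h2π), integral_Ioc_eq_integral_Ioo]
    rw [heq] at h1
    calc ENNReal.ofReal δ ≤ ENNReal.ofReal (∫ t in Ioo (0:ℝ) (2*π), gradSq u t r) :=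
          ENNReal.ofReal_le_ofReal h1
      _ = ∫⁻ t in Ioo (0:ℝ) (2*π), ENNReal.ofReal (gradSq u t r) :=
          ofReal_integral_eq_lintegral_ofReal hint
            (Filter.Eventually.of_forall fun t => by
              show (0:ℝ) ≤ gradSq u t r
              rw [gradSq]; positivity)
  have htop : (⊤ : ℝ≥0∞) ≤ ∫⁻ r in Ioi (0:ℝ),
      (∫⁻ t in Ioo (0:ℝ) (2*π), ENNReal.ofReal (gradSq u t r)) := by
    have hsub : ∫⁻ r in Ioi y, (∫⁻ t in Ioo (0:ℝ) (2*π), ENNReal.ofReal (gradSq u t r))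
        ≤ ∫⁻ r in Ioi (0:ℝ), (∫⁻ t in Ioo (0:ℝ) (2*π), ENNReal.ofReal (gradSq u t r)) :=
      lintegral_mono' (Measure.restrict_mono (Ioi_subset_Ioi (le_of_lt hy)) le_rfl) le_rfl
    refine le_trans ?_ hsub
    have hconst : ∫⁻ _ in Ioi y, ENNReal.ofReal δ ∂(volume : Measure ℝ)
        ≤ ∫⁻ r in Ioi y, (∫⁻ t in Ioo (0:ℝ) (2*π), ENNReal.ofReal (gradSq u t r)) := by
      refine lintegral_mono_ae ?_
      filter_upwards [ae_restrict_mem measurableSet_Ioi] with r hr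
      exact hEbound r (le_of_lt hr)
    refine le_trans ?_ hconst
    rw [setLIntegral_const, Real.volume_Ioi, ENNReal.mul_top
      (by simpa using (ENNReal.ofReal_pos.mpr hδpos).ne')]
  exact energy_fin hu (top_le_iff.mp (htop.trans (le_of_eq rfl)) ▸ rfl)

end Energy

section Decay
variable {u : ℝ → ℝ → ℝ}

lemma cc_deriv_neg (hu : UpperHarmonic u) (k : ℤ) {y : ℝ} (hy : 0 < y) :
    HasDerivAt (cc u k) (((-((|k| : ℤ) : ℝ) : ℝ) : ℂ) * cc u k y) y := by
  have h := cc_hasDeriv hu k hy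
  have hg := gg_zero hu k hy
  rw [gg] at hg
  have hval : dd u k y = ((-((|k| : ℤ) : ℝ) : ℝ) : ℂ) * cc u k y := by
    have := eq_neg_of_add_eq_zero_left hg
    rw [this, show ((-((|k| : ℤ) : ℝ) : ℝ) : ℂ) = -(((|k| : ℤ)) : ℂ) by norm_cast]
    ring
  rw [hval] at h
  exact h

lemma cc_exp_const (hu : UpperHarmonic u) (k : ℤ) {a b : ℝ} (ha : 0 < a) (hb : 0 < b) :
    cc u k b * Complex.exp ((((|k| : ℤ) : ℝ) : ℂ) * b)
      = cc u k a * Complex.exp ((((|k| : ℤ) : ℝ) : ℂ) * a) := by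
  have hder : ∀ r ∈ Ioi (0:ℝ), HasDerivAt (cc u k)
      ((((-((|k| : ℤ) : ℝ)) : ℝ) : ℂ) * cc u k r) r := fun r hr => cc_deriv_neg hu k hr
  have := exp_solution hder ha hb
  have hc : -(((-((|k| : ℤ) : ℝ)) : ℝ) : ℂ) = (((|k| : ℤ) : ℝ) : ℂ) := by push_cast; ring
  rw [hc] at this
  exact this

lemma cc_tendsto_zero (hu : UpperHarmonic u) (k : ℤ) :
    Filter.Tendsto (cc u k) (nhdsWithin 0 (Ioi 0)) (nhds (cc u k 0)) := by
  have h2π : (0:ℝ) < 2*π := by positivity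
  have hKc : IsCompact (Icc (0:ℝ) (2*π) ×ˢ Icc (0:ℝ) 1) := isCompact_Icc.prod isCompact_Icc
  have hKsub : (Icc (0:ℝ) (2*π) ×ˢ Icc (0:ℝ) 1) ⊆ {p : ℝ × ℝ | 0 ≤ p.2} := by
    rintro ⟨a, b⟩ ⟨_, hb⟩; exact hb.1
  obtain ⟨C, hC⟩ := hKc.exists_bound_of_continuousOn (hu.cont.mono hKsub)
  have hIoo : Ioo (0:ℝ) 1 ∈ nhdsWithin (0:ℝ) (Ioi 0) :=
    Ioo_mem_nhdsGT_of_mem (by constructor <;> norm_num)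
  have key : Filter.Tendsto (fun y => ∫ t in (0:ℝ)..(2*π), (u t y : ℂ) * ek k t)
      (nhdsWithin 0 (Ioi 0)) (nhds (∫ t in (0:ℝ)..(2*π), (u t 0 : ℂ) * ek k t)) := by
    refine intervalIntegral.tendsto_integral_filter_of_dominated_convergence
      (fun _ => C) ?_ ?_ intervalIntegrable_const ?_
    · filter_upwards [hIoo] with y hy
      exact ((Complex.continuous_ofReal.comp
        (cont_slice_horiz hu.smooth.continuousOn hy.1)).mul (ek_cont k)).aestronglyMeasurable
    · filter_upwards [hIoo] with y hy
      refine Filter.Eventually.of_forall fun t ht => ?_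
      rw [norm_mul, ek_norm, mul_one, Complex.norm_real, Real.norm_eq_abs]
      have htI : t ∈ Icc (0:ℝ) (2*π) := by
        rw [uIoc_of_le (le_of_lt h2π)] at ht
        exact ⟨le_of_lt ht.1, ht.2⟩
      have := hC (t, y) ⟨htI, ⟨le_of_lt hy.1, le_of_lt hy.2⟩⟩
      simpa using this
    · refine Filter.Eventually.of_forall fun t _ => ?_
      have h1 : Filter.Tendsto (fun y => u t y) (nhdsWithin 0 (Ioi 0)) (nhds (u t 0)) := by
        have hcw : ContinuousWithinAt (fun p : ℝ × ℝ => u p.1 p.2)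
            {p : ℝ × ℝ | 0 ≤ p.2} (t, 0) := hu.cont (t, 0) (le_refl (0:ℝ))
        have hcurve : Filter.Tendsto (fun y : ℝ => ((t, y) : ℝ × ℝ))
            (nhdsWithin 0 (Ioi 0)) (nhdsWithin (t, 0) {p : ℝ × ℝ | 0 ≤ p.2}) := by
          apply tendsto_nhdsWithin_of_tendsto_nhds_of_eventually_within
          · exact ((continuous_const.prodMk continuous_id).tendsto 0).mono_left
              nhdsWithin_le_nhds
          · exact eventually_nhdsWithin_of_forall fun y hy => show (0:ℝ) ≤ y from le_of_lt hy
        exact hcw.tendsto.comp hcurve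
      exact ((Complex.continuous_ofReal.tendsto _).comp h1).mul tendsto_const_nhds
  have := key.const_mul (((2*π:ℝ):ℂ)⁻¹)
  exact this

lemma cc_formula (hu : UpperHarmonic u) (k : ℤ) {y : ℝ} (hy : 0 < y) :
    cc u k y = cc u k 0 * Complex.exp (-((((|k| : ℤ) : ℝ)) : ℂ) * y) := by
  set κC : ℂ := ((((|k| : ℤ) : ℝ)) : ℂ) with hκC
  have h1 : Filter.Tendsto (fun a => cc u k a * Complex.exp (κC * a))
      (nhdsWithin 0 (Ioi 0)) (nhds (cc u k 0 * 1)) := by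
    refine (cc_tendsto_zero hu k).mul ?_
    have hcont : Continuous (fun a : ℝ => Complex.exp (κC * a)) :=
      Complex.continuous_exp.comp (continuous_const.mul Complex.continuous_ofReal)
    have := (hcont.tendsto 0).mono_left (nhdsWithin_le_nhds (s := Ioi (0:ℝ)))
    simpa using this
  have h2 : Filter.Tendsto (fun a => cc u k a * Complex.exp (κC * a))
      (nhdsWithin (0:ℝ) (Ioi 0)) (nhds (cc u k y * Complex.exp (κC * y))) := by
    refine Filter.Tendsto.congr' ?_ tendsto_const_nhds
    filter_upwards [self_mem_nhdsWithin] with a ha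
    exact (cc_exp_const hu k hy ha).symm
  have huniq := tendsto_nhds_unique h2 h1
  rw [mul_one] at huniq
  have hne : Complex.exp (κC * y) ≠ 0 := Complex.exp_ne_zero _
  calc cc u k y = cc u k y * Complex.exp (κC * y) * (Complex.exp (κC * y))⁻¹ := by
        field_simp
    _ = cc u k 0 * (Complex.exp (κC * y))⁻¹ := by rw [huniq]
    _ = cc u k 0 * Complex.exp (-κC * y) := by rw [neg_mul, Complex.exp_neg]

end Decay

section Fourier
variable {u : ℝ → ℝ → ℝ}

lemma interface_eq_cc (u : ℝ → ℝ → ℝ) (k : ℤ) : interfaceFourierCoeff u k = cc u k 0 := rfl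

lemma eta_bound (hu : UpperHarmonic u) : ∃ M : ℝ, 0 ≤ M ∧ ∀ k : ℤ, ‖cc u k 0‖ ≤ M := by
  have h2π : (0:ℝ) < 2*π := by positivity
  obtain ⟨C, hC⟩ := (isCompact_Icc (a := (0:ℝ)) (b := 2*π)).exists_bound_of_continuousOn
    (cont_slice_bdry hu).continuousOn
  refine ⟨max C 0, le_max_right _ _, fun k => ?_⟩
  rw [cc, norm_mul]
  have hn : ‖((2 * π : ℝ) : ℂ)⁻¹‖ = (2*π)⁻¹ := by
    rw [norm_inv, Complex.norm_real, Real.norm_eq_abs, abs_of_pos h2π]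
  rw [hn]
  have hb : ‖∫ t in (0:ℝ)..(2*π), (u t 0 : ℂ) * ek k t‖ ≤ (max C 0) * |2*π - 0| := by
    refine intervalIntegral.norm_integral_le_of_norm_le_const fun t ht => ?_
    rw [norm_mul, ek_norm, mul_one, Complex.norm_real, Real.norm_eq_abs]
    have htI : t ∈ Icc (0:ℝ) (2*π) := by
      rw [uIoc_of_le (le_of_lt h2π)] at ht
      exact ⟨le_of_lt ht.1, ht.2⟩
    exact le_trans (by simpa [Real.norm_eq_abs] using hC t htI) (le_max_left _ _)
  calc (2*π)⁻¹ * ‖∫ t in (0:ℝ)..(2*π), (u t 0 : ℂ) * ek k t‖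
      ≤ (2*π)⁻¹ * ((max C 0) * |2*π - 0|) := by gcongr
    _ = max C 0 := by
        rw [sub_zero, abs_of_pos h2π]
        field_simp

lemma summable_geo (M : ℝ) (hM : 0 ≤ M) {y : ℝ} (hy : 0 < y) :
    Summable (fun k : ℤ => M * Real.exp (-((|k| : ℤ) : ℝ) * y)) := by
  set r : ℝ := Real.exp (-y) with hr
  have hr0 : 0 ≤ r := le_of_lt (Real.exp_pos _)
  have hr1 : r < 1 := Real.exp_lt_one_iff.mpr (by linarith)
  have hgen : ∀ k : ℤ, M * Real.exp (-((|k| : ℤ) : ℝ) * y) = M * r ^ (k.natAbs) := by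
    intro k
    rw [hr, ← Real.exp_nat_mul]
    congr 1
    have : ((|k| : ℤ) : ℝ) = (k.natAbs : ℝ) := by
      rw [Nat.cast_natAbs]
    rw [this]; ring
  have hsum : Summable (fun n : ℕ => M * r ^ n) :=
    (summable_geometric_of_lt_one hr0 hr1).mul_left M
  refine Summable.congr ?_ (fun k => (hgen k).symm)
  refine Summable.of_nat_of_neg ?_ ?_
  · simpa using hsum
  · simpa using hsum

lemma fourierMode_eq (k : ℤ) (y₁ y₂ : ℝ) :
    fourierMode k y₁ y₂
      = Complex.exp (Complex.I * k * y₁) * Complex.exp (-(((|k| : ℤ) : ℝ) : ℂ) * y₂) := by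
  rw [fourierMode, ← Complex.exp_add]
  congr 1
  rw [show ((((|k| : ℤ) : ℝ)) : ℂ) = ((|k| : ℤ) : ℂ) by norm_cast]
  ring

lemma norm_fourierMode (k : ℤ) (y₁ y₂ : ℝ) :
    ‖fourierMode k y₁ y₂‖ = Real.exp (-((|k| : ℤ) : ℝ) * y₂) := by
  rw [fourierMode_eq, norm_mul]
  have h1 : ‖Complex.exp (Complex.I * k * y₁)‖ = 1 := by
    rw [show Complex.I * (k:ℂ) * (y₁:ℂ) = (((k * y₁ : ℝ)):ℂ) * Complex.I by push_cast; ring]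
    rw [Complex.norm_exp_ofReal_mul_I]
  have h2 : ‖Complex.exp (-(((|k| : ℤ) : ℝ) : ℂ) * y₂)‖ = Real.exp (-((|k| : ℤ) : ℝ) * y₂) := by
    rw [show (-(((|k| : ℤ) : ℝ) : ℂ)) = (((-((|k| : ℤ) : ℝ)) : ℝ) : ℂ) by push_cast; ring]
    exact norm_exp_real_mul _ _
  rw [h1, h2, one_mul]

/-- the main identity. -/
lemma main_hasSum (hu : UpperHarmonic u) (y₁ : ℝ) {y₂ : ℝ} (hy₂ : 0 < y₂) :
    HasSum (fun k : ℤ => interfaceFourierCoeff u k * fourierMode k y₁ y₂) ((u y₁ y₂ : ℂ)) := by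
  have h2π : (0:ℝ) < 2*π := by positivity
  haveI : Fact (0 < 2*π) := ⟨h2π⟩
  obtain ⟨M, hM0, hM⟩ := eta_bound hu
  have hP : Function.Periodic (fun t => (u t y₂ : ℂ)) (2*π) := by
    intro t
    show ((u (t + 2*π) y₂ : ℝ) : ℂ) = ((u t y₂ : ℝ) : ℂ)
    exact_mod_cast hu.periodic t y₂
  have hFc : Continuous (hP.lift) := by
    exact (Complex.continuous_ofReal.comp
      (cont_slice_horiz hu.smooth.continuousOn hy₂)).quotient_liftOn' _
  set F : C(AddCircle (2*π), ℂ) := ⟨hP.lift, hFc⟩ with hFdef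
  have hcoeff : ∀ k : ℤ, fourierCoeff (F : AddCircle (2*π) → ℂ) k = cc u k y₂ := by
    intro k
    rw [fourierCoeff_eq_intervalIntegral (F : AddCircle (2*π) → ℂ) k 0]
    have hπ : (π:ℂ) ≠ 0 := by exact_mod_cast Real.pi_ne_zero
    have hterm : ∀ x : ℝ, (fourier (-k)) ((x : ℝ) : AddCircle (2*π))
        • (F : AddCircle (2*π) → ℂ) ((x : ℝ) : AddCircle (2*π)) = (u x y₂ : ℂ) * ek k x := by
      intro x
      rw [fourier_coe_apply]
      have hF : (F : AddCircle (2*π) → ℂ) ((x : ℝ) : AddCircle (2*π)) = (u x y₂ : ℂ) :=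
        hP.lift_coe x
      rw [hF, smul_eq_mul, mul_comm]
      congr 1
      rw [ek_def]
      congr 1
      push_cast
      field_simp
    rw [show ((0:ℝ) + 2*π) = 2*π by ring]
    rw [intervalIntegral.integral_congr (fun x _ => hterm x)]
    rw [cc]
    rw [Complex.real_smul]
    congr 1
    push_cast
    rw [one_div]
  have hnorm : ∀ k : ℤ, ‖fourierCoeff (F : AddCircle (2*π) → ℂ) k‖
      ≤ M * Real.exp (-((|k| : ℤ) : ℝ) * y₂) := by
    intro k
    rw [hcoeff k, cc_formula hu k hy₂, norm_mul]
    have : ‖Complex.exp (-((((|k| : ℤ) : ℝ)) : ℂ) * y₂)‖ = Real.exp (-((|k| : ℤ) : ℝ) * y₂) := by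
      rw [show (-((((|k| : ℤ) : ℝ)) : ℂ)) = (((-((|k| : ℤ) : ℝ)) : ℝ) : ℂ) by push_cast; ring]
      exact norm_exp_real_mul _ _
    rw [this]
    exact mul_le_mul_of_nonneg_right (hM k) (le_of_lt (Real.exp_pos _))
  have hsummable : Summable (fourierCoeff (F : AddCircle (2*π) → ℂ)) := by
    refine Summable.of_norm ?_
    exact (summable_geo M hM0 hy₂).of_nonneg_of_le (fun k => norm_nonneg _) hnorm
  have hs := has_pointwise_sum_fourier_series_of_summable hsummable ((y₁ : ℝ) : AddCircle (2*π))
  have hFval : (F : AddCircle (2*π) → ℂ) ((y₁:ℝ) : AddCircle (2*π)) = (u y₁ y₂ : ℂ) :=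
    hP.lift_coe y₁
  rw [hFval] at hs
  have heq : (fun k : ℤ => interfaceFourierCoeff u k * fourierMode k y₁ y₂)
      = fun i : ℤ => fourierCoeff (F : AddCircle (2*π) → ℂ) i
        • (fourier i) ((y₁:ℝ) : AddCircle (2*π)) := by
    funext i
    have hπ : (π:ℂ) ≠ 0 := by exact_mod_cast Real.pi_ne_zero
    have hf : (fourier i) ((y₁:ℝ) : AddCircle (2*π)) = Complex.exp (Complex.I * i * y₁) := by
      rw [fourier_coe_apply]
      congr 1
      push_cast
      field_simp
    rw [smul_eq_mul, hcoeff i, hf, cc_formula hu i hy₂, interface_eq_cc, fourierMode_eq]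
    ring
  rw [heq]
  exact hs

end Fourier

end HEx

/-- Explicit Fourier-mode representation of the periodic harmonic extension in `Z⁺`
(Theorem 3.2): `u(y) = Σ_k η_k e^{i k y₁ - |k| y₂}`, the series converging absolutely. -/
theorem harmonic_extension_fourier_representation
    (u : ℝ → ℝ → ℝ) (hu : UpperHarmonic u) :
    ∀ y₁ y₂ : ℝ, 0 < y₂ →
      Summable (fun k : ℤ => ‖interfaceFourierCoeff u k * fourierMode k y₁ y₂‖) ∧
      (u y₁ y₂ : ℂ) = ∑' k : ℤ, interfaceFourierCoeff u k * fourierMode k y₁ y₂ := by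
  intro y₁ y₂ hy₂
  have hs := HEx.main_hasSum hu y₁ hy₂
  constructor
  · obtain ⟨M, hM0, hM⟩ := HEx.eta_bound hu
    refine Summable.of_nonneg_of_le (fun k => norm_nonneg _) ?_ (HEx.summable_geo M hM0 hy₂)
    intro k
    rw [norm_mul, HEx.norm_fourierMode, HEx.interface_eq_cc]
    exact mul_le_mul_of_nonneg_right (hM k) (le_of_lt (Real.exp_pos _))
  · exact hs.tsum_eq.symm

end
end
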